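/- Let V ⊆ ℂⁿ be open and bounded, Φ : V → ℝ continuous, Ψ̃ : V × V → ℂ continuous, C₀ > 0 and M > 0, with Re Ψ̃(y,y) = Φ(y) for all y ∈ V and 2 Re Ψ̃(x,y) ≤ Φ(x) + Φ(y) − (1/C₀)|x−y|² for all x, y ∈ V. Let b : V × V → ℂ be measurable with |b| ≤ M and define Π̃u(x) := h^{−n} ∫_V e^{(2/h)(Ψ̃(x,y) − Ψ̃(y,y))} b(x,y) u(y) dL(y). Let ψ₁ : V → ℝ be continuous with ψ₁ ≥ 0, set ψ₂(x) := inf_{y∈V} (|x−y|²/(2C₀) + ψ₁(y)), and put Φ₁ := Φ − ψ₁, Φ₂ := Φ − ψ₂. Then there exists C₁ > 0, depending only on n, C₀ and M, such that for every h ∈ (0,1] and every measurable u : V → ℂ with ‖u‖_{L²_{Φ₁}(V)} < ∞: ‖Π̃u‖_{L²_{Φ₂}(V)} ≤ C₁ ‖u‖_{L²_{Φ₁}(V)}. -/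

import Mathlib

open Complex MeasureTheory
open scoped ENNReal

noncomputable section

/-- `ℂⁿ` with its Euclidean (Hermitian) norm. -/
abbrev En (n : ℕ) := EuclideanSpace ℂ (Fin n)

instance (n : ℕ) : MeasurableSpace (En n) := borel _
instance (n : ℕ) : BorelSpace (En n) := ⟨rfl⟩
/-- The real inner product structure, giving Lebesgue measure (`volume`) on `ℂⁿ ≅ ℝ^{2n}`. -/
instance (n : ℕ) : InnerProductSpace ℝ (En n) := InnerProductSpace.rclikeToReal ℂ (En n)

/-- The (possibly infinite) weighted `L²` norm `‖u‖_{L²_Φ(V)}`. -/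
def wNormE (n : ℕ) (V : Set (En n)) (Φ : En n → ℝ) (h : ℝ) (u : En n → ℂ) : ENNReal :=
  (∫⁻ x in V, ENNReal.ofReal (‖u x‖ ^ 2 * Real.exp (-(2 * Φ x) / h))) ^ (1/2 : ℝ)

/-- The Bergman-type operator
`Π̃u(x) = h^{−n} ∫_V e^{(2/h)(Ψ̃(x,y) − Ψ̃(y,y))} b(x,y) u(y) dL(y)`. -/
def PiOp (n : ℕ) (V : Set (En n)) (Ψt b : En n → En n → ℂ) (h : ℝ)
    (u : En n → ℂ) (x : En n) : ℂ :=
  ((h ^ n : ℝ) : ℂ)⁻¹ *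
    ∫ y in V, Complex.exp (((2 / h : ℝ) : ℂ) * (Ψt x y - Ψt y y)) * b x y * u y

/-- The infimal convolution `ψ₂(x) = inf_{y∈V} (|x−y|²/(2C₀) + ψ₁(y))`. -/
def infConv (n : ℕ) (V : Set (En n)) (ψ₁ : En n → ℝ) (C₀ : ℝ) (x : En n) : ℝ :=
  ⨅ y : V, (‖x - (y : En n)‖ ^ 2 / (2 * C₀) + ψ₁ y)

/-- Cauchy–Schwarz / Schur-type inequality for `lintegral`. -/
lemma lintegral_CS {α : Type*} [MeasurableSpace α] (μ : Measure α)
    {K W : α → ENNReal} (hK : AEMeasurable K μ) (hW : AEMeasurable W μ) :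
    (∫⁻ a, K a * W a ∂μ) ^ 2 ≤ (∫⁻ a, K a ∂μ) * ∫⁻ a, K a * (W a) ^ 2 ∂μ := by
  have hpq : Real.HolderConjugate 2 2 := Real.holderConjugate_iff.mpr ⟨one_lt_two, by norm_num⟩
  have hf : AEMeasurable (fun a => K a ^ (2⁻¹ : ℝ)) μ := hK.pow_const _
  have hg : AEMeasurable (fun a => K a ^ (2⁻¹ : ℝ) * W a) μ := hf.mul hW
  have key := ENNReal.lintegral_mul_le_Lp_mul_Lq μ hpq hf hg
  have e0 : ∀ a, ((fun a => K a ^ (2⁻¹ : ℝ)) * fun a => K a ^ (2⁻¹ : ℝ) * W a) a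
      = K a * W a := by
    intro a
    simp only [Pi.mul_apply]
    rw [← mul_assoc, ← ENNReal.rpow_add_of_nonneg _ _ (by norm_num) (by norm_num)]
    norm_num
  have e1 : ∀ a, (K a ^ (2⁻¹ : ℝ)) ^ (2 : ℝ) = K a := by
    intro a
    rw [← ENNReal.rpow_mul]
    norm_num
  have e2 : ∀ a, (K a ^ (2⁻¹ : ℝ) * W a) ^ (2 : ℝ) = K a * (W a) ^ 2 := by
    intro a
    rw [ENNReal.mul_rpow_of_nonneg _ _ (by norm_num : (0:ℝ) ≤ 2), e1 a,
      show ((2:ℝ)) = ((2:ℕ) : ℝ) by norm_num, ENNReal.rpow_natCast]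
  have key2 : (∫⁻ a, K a * W a ∂μ)
      ≤ (∫⁻ a, K a ∂μ) ^ (1/2 : ℝ) * (∫⁻ a, K a * (W a) ^ 2 ∂μ) ^ (1/2 : ℝ) := by
    calc ∫⁻ a, K a * W a ∂μ
        = ∫⁻ a, ((fun a => K a ^ (2⁻¹ : ℝ)) * fun a => K a ^ (2⁻¹ : ℝ) * W a) a ∂μ :=
          (lintegral_congr e0).symm
      _ ≤ (∫⁻ a, (K a ^ (2⁻¹ : ℝ)) ^ (2:ℝ) ∂μ) ^ (1/2 : ℝ)
            * (∫⁻ a, (K a ^ (2⁻¹ : ℝ) * W a) ^ (2:ℝ) ∂μ) ^ (1/2 : ℝ) := key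
      _ = (∫⁻ a, K a ∂μ) ^ (1/2 : ℝ) * (∫⁻ a, K a * (W a) ^ 2 ∂μ) ^ (1/2 : ℝ) := by
          rw [lintegral_congr e1, lintegral_congr e2]
  calc (∫⁻ a, K a * W a ∂μ) ^ 2
      ≤ ((∫⁻ a, K a ∂μ) ^ (1/2 : ℝ) * (∫⁻ a, K a * (W a) ^ 2 ∂μ) ^ (1/2 : ℝ)) ^ 2 := by
        gcongr
    _ = (∫⁻ a, K a ∂μ) * ∫⁻ a, K a * (W a) ^ 2 ∂μ := by
        rw [mul_pow, ← ENNReal.rpow_natCast (_ ^ (1/2 : ℝ)) 2,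
          ← ENNReal.rpow_natCast ((∫⁻ a, K a * (W a) ^ 2 ∂μ) ^ (1/2 : ℝ)) 2,
          ← ENNReal.rpow_mul, ← ENNReal.rpow_mul]
        norm_num

/-- the Bergman-type operator `Π̃` is `O(1) : L²_{Φ−ψ₁}(V) → L²_{Φ−ψ₂}(V)`,
where `ψ₂` is the infimal convolution of `ψ₁` with `|·|²/(2C₀)`. -/
theorem statement17 (n : ℕ)
    (V : Set (En n)) (hV : IsOpen V) (hVb : Bornology.IsBounded V)
    (Φ : En n → ℝ) (hΦ : ContinuousOn Φ V)
    (Ψt : En n → En n → ℂ)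
    (hΨt : ContinuousOn (fun p : En n × En n => Ψt p.1 p.2) (V ×ˢ V))
    (C₀ M : ℝ) (hC₀ : 0 < C₀) (hM : 0 < M)
    (hdiag : ∀ y ∈ V, (Ψt y y).re = Φ y)
    (hub : ∀ x ∈ V, ∀ y ∈ V, 2 * (Ψt x y).re ≤ Φ x + Φ y - (1/C₀) * ‖x - y‖ ^ 2)
    (b : En n → En n → ℂ) (hb : Measurable fun p : En n × En n => b p.1 p.2)
    (hbM : ∀ x ∈ V, ∀ y ∈ V, ‖b x y‖ ≤ M)
    (ψ₁ : En n → ℝ) (hψ₁cont : ContinuousOn ψ₁ V) (hψ₁nn : ∀ x ∈ V, 0 ≤ ψ₁ x) :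
    ∃ C₁ : ℝ, 0 < C₁ ∧ ∀ h ∈ Set.Ioc (0:ℝ) 1, ∀ u : En n → ℂ, Measurable u →
      wNormE n V (fun x => Φ x - ψ₁ x) h u < ⊤ →
      wNormE n V (fun x => Φ x - infConv n V ψ₁ C₀ x) h (PiOp n V Ψt b h u)
        ≤ ENNReal.ofReal C₁ * wNormE n V (fun x => Φ x - ψ₁ x) h u := by
  classical
  refine ⟨M * (2 * Real.pi * C₀) ^ n, by positivity, ?_⟩
  rintro h ⟨hh0, hh1⟩ u hu -
  have hVm : MeasurableSet V := hV.measurableSet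
  have hhn : (0:ℝ) < h ^ n := pow_pos hh0 n
  set ψ₂ : En n → ℝ := infConv n V ψ₁ C₀ with hψ₂def
  set C : ℝ≥0∞ := ENNReal.ofReal (M * (2 * Real.pi * C₀) ^ n) with hCdef
  have hCne : C ≠ ⊤ := by rw [hCdef]; exact ENNReal.ofReal_ne_top
  set b0 : ℝ := (2 * C₀ * h)⁻¹ with hb0def
  have hb0 : 0 < b0 := by rw [hb0def]; positivity
  set W : En n → ℝ≥0∞ :=
    fun y => ENNReal.ofReal (‖u y‖ * Real.exp (-(Φ y - ψ₁ y) / h)) with hWdef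
  set E : En n → En n → ℝ := fun x y =>
    (2 / h) * ((Ψt x y).re - (Ψt y y).re) + (-(Φ x - ψ₂ x) / h) + (Φ y - ψ₁ y) / h with hEdef
  set K : En n → En n → ℝ≥0∞ :=
    fun x y => ENNReal.ofReal ((h ^ n)⁻¹ * M * Real.exp (E x y)) with hKdef
  set K₀ : En n → En n → ℝ≥0∞ :=
    fun x y => ENNReal.ofReal ((h ^ n)⁻¹ * M * Real.exp (-(b0 * ‖y - x‖ ^ 2))) with hK0def
  -- the infimal convolution bound
  have hψ₂le : ∀ x : En n, ∀ y ∈ V, ψ₂ x ≤ ‖x - y‖ ^ 2 / (2 * C₀) + ψ₁ y := by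
    intro x y hy
    have hbdd : BddBelow (Set.range fun z : V => ‖x - (z : En n)‖ ^ 2 / (2 * C₀) + ψ₁ z) := by
      refine ⟨0, ?_⟩
      rintro - ⟨z, rfl⟩
      have h1 := hψ₁nn z z.2
      positivity
    rw [hψ₂def]
    simp only [infConv]
    exact ciInf_le hbdd ⟨y, hy⟩
  -- kernel comparison on `V × V`
  have hKle : ∀ x ∈ V, ∀ y ∈ V, K x y ≤ K₀ x y := by
    intro x hx y hy
    simp only [hKdef, hK0def]
    apply ENNReal.ofReal_le_ofReal
    apply mul_le_mul_of_nonneg_left _ (by positivity)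
    apply Real.exp_le_exp.mpr
    have h1 := hub x hx y hy
    have h2 := hdiag y hy
    have h3 := hψ₂le x y hy
    have hnum : 2 * (Ψt x y).re - 2 * (Ψt y y).re - (Φ x - ψ₂ x) + (Φ y - ψ₁ y)
        ≤ -(‖x - y‖ ^ 2 / (2 * C₀)) := by
      have h5 : ‖x - y‖ ^ 2 / (2 * C₀) * 2 = 1 / C₀ * ‖x - y‖ ^ 2 := by
        field_simp
      linarith
    have hE : E x y
        = (2 * (Ψt x y).re - 2 * (Ψt y y).re - (Φ x - ψ₂ x) + (Φ y - ψ₁ y)) / h := by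
      simp only [hEdef]
      field_simp
      ring
    have hgoal : -(b0 * ‖y - x‖ ^ 2)
        = (-(‖x - y‖ ^ 2 / (2 * C₀))) / h := by
      rw [hb0def, norm_sub_rev]
      field_simp
    rw [hE, hgoal]
    gcongr
  -- Gaussian integral facts
  have hintg : Integrable (fun v : En n => Real.exp (-(b0 * ‖v‖ ^ 2))) := by
    have h1 := (GaussianFourier.integrable_cexp_neg_mul_sq_norm_add (V := En n)
      (b := (b0 : ℂ)) (by simpa using hb0) 0 0).norm
    refine h1.congr (Filter.Eventually.of_forall fun v => ?_)
    simp only [zero_mul, add_zero, Complex.norm_exp]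
    congr 1
    rw [show (-(b0:ℂ)) * (‖v‖:ℂ) ^ 2 = ((-(b0 * ‖v‖ ^ 2) : ℝ) : ℂ) by push_cast; ring,
      Complex.ofReal_re]
  have hfr : Module.finrank ℝ (En n) = 2 * n := by
    have h1 : Module.finrank ℝ ℂ * Module.finrank ℂ (En n) = Module.finrank ℝ (En n) :=
      Module.finrank_mul_finrank ℝ ℂ (En n)
    rw [finrank_euclideanSpace, Fintype.card_fin, Complex.finrank_real_complex] at h1
    omega
  have hval : ∫ v : En n, Real.exp (-(b0 * ‖v‖ ^ 2)) = (Real.pi * (2 * C₀ * h)) ^ n := by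
    have h1 := GaussianFourier.integral_rexp_neg_mul_sq_norm (V := En n) hb0
    simp only [neg_mul] at h1
    rw [h1, hfr, show (((2 * n : ℕ) : ℝ) / 2 : ℝ) = (n : ℝ) by push_cast; ring,
      Real.rpow_natCast]
    congr 1
    rw [hb0def]
    field_simp
  have hgauss : ∀ a : En n,
      (∫⁻ z, ENNReal.ofReal ((h ^ n)⁻¹ * M * Real.exp (-(b0 * ‖z - a‖ ^ 2)))) = C := by
    intro a
    have hsplit : ∀ z : En n,
        ENNReal.ofReal ((h ^ n)⁻¹ * M * Real.exp (-(b0 * ‖z - a‖ ^ 2)))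
          = ENNReal.ofReal ((h ^ n)⁻¹ * M)
            * ENNReal.ofReal (Real.exp (-(b0 * ‖z - a‖ ^ 2))) := fun z =>
      ENNReal.ofReal_mul (by positivity)
    rw [lintegral_congr hsplit, lintegral_const_mul' _ _ ENNReal.ofReal_ne_top,
      lintegral_sub_right_eq_self (fun z => ENNReal.ofReal (Real.exp (-(b0 * ‖z‖ ^ 2)))) a,
      ← ofReal_integral_eq_lintegral_ofReal hintg
        (Filter.Eventually.of_forall fun z => (Real.exp_pos _).le),
      hval, ← ENNReal.ofReal_mul (by positivity), hCdef]
    congr 1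
    field_simp
    ring
  have hrow : ∀ x : En n, (∫⁻ y in V, K₀ x y) ≤ C := by
    intro x
    calc (∫⁻ y in V, K₀ x y) ≤ ∫⁻ y, K₀ x y := setLIntegral_le_lintegral _ _
      _ = C := hgauss x
  have hcol : ∀ y : En n, (∫⁻ x in V, K₀ x y) ≤ C := by
    intro y
    have hc : ∀ x : En n, K₀ x y
        = ENNReal.ofReal ((h ^ n)⁻¹ * M * Real.exp (-(b0 * ‖x - y‖ ^ 2))) := by
      intro x
      simp only [hK0def]
      rw [norm_sub_rev]
    calc (∫⁻ x in V, K₀ x y)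
        = ∫⁻ x in V, ENNReal.ofReal ((h ^ n)⁻¹ * M * Real.exp (-(b0 * ‖x - y‖ ^ 2))) :=
          lintegral_congr hc
      _ ≤ ∫⁻ x, ENNReal.ofReal ((h ^ n)⁻¹ * M * Real.exp (-(b0 * ‖x - y‖ ^ 2))) :=
          setLIntegral_le_lintegral _ _
      _ = C := hgauss y
  -- measurability facts
  have hexpcont : ContinuousOn (fun y => Real.exp (-(Φ y - ψ₁ y) / h)) V :=
    Real.continuous_exp.comp_continuousOn (((hΦ.sub hψ₁cont).neg).div_const h)
  have hWmeas : AEMeasurable W (volume.restrict V) := by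
    rw [hWdef]
    exact ENNReal.measurable_ofReal.comp_aemeasurable
      ((hu.norm.aemeasurable).mul (hexpcont.aemeasurable hVm))
  have hKxmeas : ∀ x ∈ V, AEMeasurable (fun y => K x y) (volume.restrict V) := by
    intro x hx
    have c1 : ContinuousOn (fun y => (Ψt x y).re) V :=
      Complex.continuous_re.comp_continuousOn
        (hΨt.comp (Continuous.continuousOn (Continuous.prodMk_right x))
          (fun y hy => Set.mk_mem_prod hx hy))
    have c2 : ContinuousOn (fun y => (Ψt y y).re) V :=
      Complex.continuous_re.comp_continuousOn
        (hΨt.comp ((continuous_id.prodMk continuous_id).continuousOn)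
          (fun y hy => Set.mk_mem_prod hy hy))
    have cE : ContinuousOn (fun y => E x y) V := by
      simp only [hEdef]
      exact ((continuousOn_const.mul (c1.sub c2)).add continuousOn_const).add
        ((hΦ.sub hψ₁cont).div_const h)
    have : ContinuousOn (fun y => (h ^ n)⁻¹ * M * Real.exp (E x y)) V :=
      continuousOn_const.mul (Real.continuous_exp.comp_continuousOn cE)
    simp only [hKdef]
    exact ENNReal.measurable_ofReal.comp_aemeasurable (this.aemeasurable hVm)
  -- the pointwise bound on the operator
  have claim1 : ∀ x ∈ V,
      ENNReal.ofReal (‖PiOp n V Ψt b h u x‖ ^ 2 * Real.exp (-(2 * (Φ x - ψ₂ x)) / h))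
        ≤ (∫⁻ y in V, K x y * W y) ^ 2 := by
    intro x hx
    have hsq : ‖PiOp n V Ψt b h u x‖ ^ 2 * Real.exp (-(2 * (Φ x - ψ₂ x)) / h)
        = (‖PiOp n V Ψt b h u x‖ * Real.exp (-(Φ x - ψ₂ x) / h)) ^ 2 := by
      rw [mul_pow, pow_two (Real.exp (-(Φ x - ψ₂ x) / h)), ← Real.exp_add]
      congr 2
      ring
    rw [hsq, ENNReal.ofReal_pow (by positivity)]
    have hstep : ENNReal.ofReal (‖PiOp n V Ψt b h u x‖ * Real.exp (-(Φ x - ψ₂ x) / h))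
        ≤ ∫⁻ y in V, K x y * W y := by
      have hnorm : ‖PiOp n V Ψt b h u x‖
          = (h ^ n)⁻¹
            * ‖∫ y in V, Complex.exp (((2 / h : ℝ) : ℂ) * (Ψt x y - Ψt y y)) * b x y * u y‖ := by
        simp only [PiOp, norm_mul, norm_inv, Complex.norm_real, Real.norm_eq_abs,
          abs_of_pos hhn]
      have hpoint : ∀ y ∈ V,
          ENNReal.ofReal ((h ^ n)⁻¹ * Real.exp (-(Φ x - ψ₂ x) / h))
            * (‖Complex.exp (((2 / h : ℝ) : ℂ) * (Ψt x y - Ψt y y)) * b x y * u y‖₊ : ℝ≥0∞)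
            ≤ K x y * W y := by
        intro y hy
        have hFnorm : ‖Complex.exp (((2 / h : ℝ) : ℂ) * (Ψt x y - Ψt y y)) * b x y * u y‖
            = Real.exp ((2 / h) * ((Ψt x y).re - (Ψt y y).re)) * ‖b x y‖ * ‖u y‖ := by
          rw [norm_mul, norm_mul, Complex.norm_exp]
          congr 3
          simp [Complex.mul_re, Complex.sub_re, Complex.sub_im]
        rw [← enorm_eq_nnnorm, ← ofReal_norm, hFnorm,
          ← ENNReal.ofReal_mul (by positivity)]
        have hKW : K x y * W y
            = ENNReal.ofReal (((h ^ n)⁻¹ * M * Real.exp (E x y))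
                * (‖u y‖ * Real.exp (-(Φ y - ψ₁ y) / h))) := by
          simp only [hKdef, hWdef]
          rw [← ENNReal.ofReal_mul (by positivity)]
        rw [hKW]
        apply ENNReal.ofReal_le_ofReal
        have hEeq : ((h ^ n)⁻¹ * M * Real.exp (E x y))
              * (‖u y‖ * Real.exp (-(Φ y - ψ₁ y) / h))
            = (h ^ n)⁻¹ * Real.exp (-(Φ x - ψ₂ x) / h)
              * (Real.exp ((2 / h) * ((Ψt x y).re - (Ψt y y).re)) * M * ‖u y‖) := by
          simp only [hEdef]
          rw [Real.exp_add, Real.exp_add,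
            show -(Φ y - ψ₁ y) / h = -((Φ y - ψ₁ y) / h) by ring, Real.exp_neg]
          field_simp
        rw [hEeq]
        apply mul_le_mul_of_nonneg_left _ (by positivity)
        apply mul_le_mul_of_nonneg_right _ (norm_nonneg _)
        exact mul_le_mul_of_nonneg_left (hbM x hx y hy) (Real.exp_pos _).le
      calc ENNReal.ofReal (‖PiOp n V Ψt b h u x‖ * Real.exp (-(Φ x - ψ₂ x) / h))
          = ENNReal.ofReal ((h ^ n)⁻¹ * Real.exp (-(Φ x - ψ₂ x) / h))
            * (‖∫ y in V, Complex.exp (((2 / h : ℝ) : ℂ) * (Ψt x y - Ψt y y))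
                * b x y * u y‖₊ : ℝ≥0∞) := by
            rw [← enorm_eq_nnnorm, ← ofReal_norm, ← ENNReal.ofReal_mul (by positivity), hnorm]
            congr 1
            ring
        _ ≤ ENNReal.ofReal ((h ^ n)⁻¹ * Real.exp (-(Φ x - ψ₂ x) / h))
            * ∫⁻ y in V, (‖Complex.exp (((2 / h : ℝ) : ℂ) * (Ψt x y - Ψt y y))
                * b x y * u y‖₊ : ℝ≥0∞) := by
            gcongr
            exact enorm_integral_le_lintegral_enorm _
        _ = ∫⁻ y in V, ENNReal.ofReal ((h ^ n)⁻¹ * Real.exp (-(Φ x - ψ₂ x) / h))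
            * (‖Complex.exp (((2 / h : ℝ) : ℂ) * (Ψt x y - Ψt y y)) * b x y * u y‖₊ : ℝ≥0∞) :=
            (lintegral_const_mul' _ _ ENNReal.ofReal_ne_top).symm
        _ ≤ ∫⁻ y in V, K x y * W y := by
            apply lintegral_mono_ae
            filter_upwards [ae_restrict_mem hVm] with y hy
            exact hpoint y hy
    gcongr
  -- swapping the order of integration
  have hK0Wmeas : AEMeasurable
      (fun p : En n × En n => K₀ p.1 p.2 * (W p.2) ^ 2)
      ((volume.restrict V).prod (volume.restrict V)) := by
    have hK0cont : Continuous fun p : En n × En n =>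
        ENNReal.ofReal ((h ^ n)⁻¹ * M * Real.exp (-(b0 * ‖p.2 - p.1‖ ^ 2))) := by
      apply ENNReal.continuous_ofReal.comp
      apply continuous_const.mul
      exact Real.continuous_exp.comp
        (continuous_const.mul ((continuous_snd.sub continuous_fst).norm.pow 2)).neg
    have h1 : AEMeasurable (fun p : En n × En n => W p.2)
        ((volume.restrict V).prod (volume.restrict V)) :=
      hWmeas.comp_quasiMeasurePreserving Measure.quasiMeasurePreserving_snd
    simp only [hK0def]
    exact hK0cont.measurable.aemeasurable.mul (h1.pow_const 2)
  have hswap : ∫⁻ x in V, ∫⁻ y in V, K₀ x y * (W y) ^ 2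
      = ∫⁻ y in V, ∫⁻ x in V, K₀ x y * (W y) ^ 2 :=
    lintegral_lintegral_swap hK0Wmeas
  -- the main estimate on squares
  have T1 : (∫⁻ x in V,
        ENNReal.ofReal (‖PiOp n V Ψt b h u x‖ ^ 2 * Real.exp (-(2 * (Φ x - ψ₂ x)) / h)))
      ≤ C ^ 2 * ∫⁻ y in V, (W y) ^ 2 := by
    calc (∫⁻ x in V,
        ENNReal.ofReal (‖PiOp n V Ψt b h u x‖ ^ 2 * Real.exp (-(2 * (Φ x - ψ₂ x)) / h)))
        ≤ ∫⁻ x in V, (∫⁻ y in V, K x y * W y) ^ 2 := by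
          apply lintegral_mono_ae
          filter_upwards [ae_restrict_mem hVm] with x hx
          exact claim1 x hx
      _ ≤ ∫⁻ x in V, (∫⁻ y in V, K x y) * ∫⁻ y in V, K x y * (W y) ^ 2 := by
          apply lintegral_mono_ae
          filter_upwards [ae_restrict_mem hVm] with x hx
          exact lintegral_CS _ (hKxmeas x hx) hWmeas
      _ ≤ ∫⁻ x in V, C * ∫⁻ y in V, K₀ x y * (W y) ^ 2 := by
          apply lintegral_mono_ae
          filter_upwards [ae_restrict_mem hVm] with x hx
          apply mul_le_mul'
          · refine le_trans ?_ (hrow x)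
            apply lintegral_mono_ae
            filter_upwards [ae_restrict_mem hVm] with y hy
            exact hKle x hx y hy
          · apply lintegral_mono_ae
            filter_upwards [ae_restrict_mem hVm] with y hy
            exact mul_le_mul' (hKle x hx y hy) le_rfl
      _ = C * ∫⁻ x in V, ∫⁻ y in V, K₀ x y * (W y) ^ 2 :=
          lintegral_const_mul' _ _ hCne
      _ = C * ∫⁻ y in V, ∫⁻ x in V, K₀ x y * (W y) ^ 2 := by rw [hswap]
      _ = C * ∫⁻ y in V, (∫⁻ x in V, K₀ x y) * (W y) ^ 2 := by
          congr 1
          apply lintegral_congr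
          intro y
          exact lintegral_mul_const' _ _ (ENNReal.pow_ne_top ENNReal.ofReal_ne_top)
      _ ≤ C * ∫⁻ y in V, C * (W y) ^ 2 := by
          apply mul_le_mul' le_rfl
          apply lintegral_mono
          intro y
          exact mul_le_mul' (hcol y) le_rfl
      _ = C ^ 2 * ∫⁻ y in V, (W y) ^ 2 := by
          rw [lintegral_const_mul' C _ hCne]
          ring
  -- conclude
  have hWsq : ∀ y : En n,
      ENNReal.ofReal (‖u y‖ ^ 2 * Real.exp (-(2 * (Φ y - ψ₁ y)) / h)) = (W y) ^ 2 := by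
    intro y
    have hsq : ‖u y‖ ^ 2 * Real.exp (-(2 * (Φ y - ψ₁ y)) / h)
        = (‖u y‖ * Real.exp (-(Φ y - ψ₁ y) / h)) ^ 2 := by
      rw [mul_pow, pow_two (Real.exp (-(Φ y - ψ₁ y) / h)), ← Real.exp_add]
      congr 2
      ring
    rw [hsq, ENNReal.ofReal_pow (by positivity), hWdef]
  have hRHS : wNormE n V (fun x => Φ x - ψ₁ x) h u = (∫⁻ y in V, (W y) ^ 2) ^ (1/2 : ℝ) := by
    rw [wNormE]
    congr 1
    exact lintegral_congr hWsq
  rw [hRHS]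
  calc wNormE n V (fun x => Φ x - ψ₂ x) h (PiOp n V Ψt b h u)
      = (∫⁻ x in V,
          ENNReal.ofReal (‖PiOp n V Ψt b h u x‖ ^ 2
            * Real.exp (-(2 * (Φ x - ψ₂ x)) / h))) ^ (1/2 : ℝ) := rfl
    _ ≤ (C ^ 2 * ∫⁻ y in V, (W y) ^ 2) ^ (1/2 : ℝ) :=
        ENNReal.rpow_le_rpow T1 (by norm_num)
    _ = C * (∫⁻ y in V, (W y) ^ 2) ^ (1/2 : ℝ) := by
        rw [ENNReal.mul_rpow_of_nonneg _ _ (by norm_num : (0:ℝ) ≤ 1/2),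
          ← ENNReal.rpow_natCast C 2, ← ENNReal.rpow_mul]
        norm_num

end
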